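/- Let r > 0 and set x = 1/(r+2). Then the point (x, x, r·x) is a stationary point of the symmetric vector field F (i.e. F_1 = F_2 = F_3 = 0 at this point) if and only if P_{a,β}(r) = a·r^{β+1} − r^β + (1+a)·r − 2a = 0. -/
import Mathlib


noncomputable def symF (a β : ℝ) (i : Fin 3) (x₁ x₂ x₃ : ℝ) : ℝ :=
  let S := x₁ ^ β + x₂ ^ β + x₃ ^ β
  match i with
  | 0 => (x₁ ^ β + a * (x₂ ^ β + x₃ ^ β)) / ((1 + 2 * a) * S) - x₁
  | 1 => (x₂ ^ β + a * (x₁ ^ β + x₃ ^ β)) / ((1 + 2 * a) * S) - x₂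
  | 2 => (x₃ ^ β + a * (x₁ ^ β + x₂ ^ β)) / ((1 + 2 * a) * S) - x₃

noncomputable def P (a β z : ℝ) : ℝ := a * z ^ (β + 1) - z ^ β + (1 + a) * z - 2 * a

theorem stationary_iff_root (a β r : ℝ) (ha : 0 < a) (hβ : 0 < β) (hr : 0 < r) :
    (∀ i : Fin 3, symF a β i (1 / (r + 2)) (1 / (r + 2)) (r * (1 / (r + 2))) = 0) ↔
      P a β r = 0 := by
  have hr2 : (0:ℝ) < r + 2 := by linarith
  set x : ℝ := 1 / (r + 2) with hxdef
  have hx : 0 < x := by positivity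
  have hxb : 0 < x ^ β := Real.rpow_pos_of_pos hx β
  have hrb : 0 < r ^ β := Real.rpow_pos_of_pos hr β
  have hmul : (r * x) ^ β = r ^ β * x ^ β := Real.mul_rpow hr.le hx.le
  have ha2 : (0:ℝ) < 1 + 2 * a := by linarith
  have hP : P a β r = a * (r ^ β * r) - r ^ β + (1 + a) * r - 2 * a := by
    rw [P, Real.rpow_add hr, Real.rpow_one]
  have hden : (1 + 2 * a) * (x ^ β + x ^ β + r ^ β * x ^ β) ≠ 0 := by positivity
  have hxbx : x ^ β * x ≠ 0 := by positivity
  have key0 : x ^ β + a * (x ^ β + r ^ β * x ^ β)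
      - x * ((1 + 2 * a) * (x ^ β + x ^ β + r ^ β * x ^ β))
      = P a β r * (x ^ β * x) := by
    rw [hP, hxdef]; field_simp; ring
  have key2 : r ^ β * x ^ β + a * (x ^ β + x ^ β)
      - r * x * ((1 + 2 * a) * (x ^ β + x ^ β + r ^ β * x ^ β))
      = -2 * P a β r * (x ^ β * x) := by
    rw [hP, hxdef]; field_simp; ring
  have E0 : symF a β 0 x x (r * x) = 0 ↔ P a β r = 0 := by
    simp only [symF, hmul]
    rw [sub_eq_zero, div_eq_iff hden, ← sub_eq_zero, key0, mul_eq_zero]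
    simp [hxbx]
  have E2 : symF a β 2 x x (r * x) = 0 ↔ P a β r = 0 := by
    simp only [symF, hmul]
    rw [sub_eq_zero, div_eq_iff hden, ← sub_eq_zero, key2]
    constructor
    · intro h
      have := mul_eq_zero.mp h
      rcases this with h' | h'
      · rcases mul_eq_zero.mp h' with h'' | h'' <;> [norm_num at h''; linarith]
      · exact absurd h' hxbx
    · intro h; rw [h]; ring
  constructor
  · intro h
    exact E0.mp (h 0)
  · intro h i
    fin_cases i
    · exact E0.mpr h
    · simpa [symF] using E0.mpr h
    · exact E2.mpr h
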